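/- Let Z be a finite set of points in a pseudometric space where each point z is labeled with a nonempty subset L(z) of [m], and suppose that whenever L(x) ⊆ L(y) or L(y) ⊆ L(x) for distinct x,y ∈ Z, we have d(x,y) ≥ M·d₂, where M = C(m, floor(m/2)). Form the graph G_Z on Z with edges between points at distance < d₂. Then any two points x,y in the same connected component satisfy d(x,y) < (M−1)·d₂, and no component contains two points with comparable label sets. -/

import Mathlib

open List in
/-- distance bound along a chain -/
lemma chain_dist_bound {U : Type*} [PseudoMetricSpace U] {d₂ : ℝ}
    (l : List U) (hc : List.Chain' (fun x y => dist x y < d₂) l) :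
    ∀ k i (hj : i + k + 1 < l.length),
      dist (l.get ⟨i, by omega⟩) (l.get ⟨i + k + 1, hj⟩) < (k + 1 : ℕ) * d₂ := by
  intro k
  induction k with
  | zero =>
    intro i hj
    have : dist (l.get ⟨i, by omega⟩) (l.get ⟨i + 1, by omega⟩) < d₂ :=
      List.isChain_iff_getElem.mp hc i (by omega)
    simpa using this
  | succ n ih =>
    intro i hj
    have h1 := ih i (by omega)
    have h2 : dist (l.get ⟨i + n + 1, by omega⟩) (l.get ⟨i + (n+1) + 1, hj⟩) < d₂ :=
      List.isChain_iff_getElem.mp hc (i + n + 1) (by omega)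
    calc dist (l.get ⟨i, by omega⟩) (l.get ⟨i + (n+1) + 1, hj⟩)
        ≤ dist (l.get ⟨i, by omega⟩) (l.get ⟨i + n + 1, by omega⟩)
          + dist (l.get ⟨i + n + 1, by omega⟩) (l.get ⟨i + (n+1) + 1, hj⟩) := dist_triangle _ _ _
      _ < (n + 1 : ℕ) * d₂ + d₂ := by
          refine add_lt_add h1 ?_
          have : i + n + 1 + 1 = i + (n+1) + 1 := by omega
          convert h2 using 3 <;> omega
      _ = ((n + 1) + 1 : ℕ) * d₂ := by push_cast; ring

/-- Among M+1 distinct subsets-labeled points, two have comparable labels (Sperner). -/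
lemma exists_comparable {U : Type*} [DecidableEq U] {m : ℕ} (L : U → Finset (Fin m))
    (s : Finset U) (hcard : m.choose (m / 2) < s.card) :
    ∃ x ∈ s, ∃ y ∈ s, x ≠ y ∧ (L x ⊆ L y ∨ L y ⊆ L x) := by
  by_contra h
  push_neg at h
  have hinj : Set.InjOn L s := by
    intro x hx y hy hxy
    by_contra hne
    exact (h x hx y hy hne).1 (le_of_eq hxy)
  have hanti : IsAntichain (· ⊆ ·) ((s.image L : Finset (Finset (Fin m))) : Set (Finset (Fin m))) := by
    intro A hA B hB hAB hsub
    simp only [Finset.coe_image, Set.mem_image, Finset.mem_coe] at hA hB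
    obtain ⟨x, hx, rfl⟩ := hA
    obtain ⟨y, hy, rfl⟩ := hB
    have hne : x ≠ y := fun hxy => hAB (by rw [hxy])
    exact (h x hx y hy hne).1 hsub
  have := IsAntichain.sperner hanti
  rw [Finset.card_image_of_injOn hinj] at this
  simp only [Fintype.card_fin] at this
  omega

theorem component_width_overlap {U : Type*} [PseudoMetricSpace U]
    (m : ℕ) (hm : 1 ≤ m) (d₂ : ℝ) (hd₂ : 0 < d₂)
    (Z : Finset U) (L : U → Finset (Fin m))
    (hL : ∀ z ∈ Z, (L z).Nonempty)
    (hsep : ∀ x ∈ Z, ∀ y ∈ Z, x ≠ y → (L x ⊆ L y ∨ L y ⊆ L x) →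
      (m.choose (m / 2) : ℝ) * d₂ ≤ dist x y)
    (G : SimpleGraph {z // z ∈ Z})
    (hG : ∀ a b : {z // z ∈ Z}, G.Adj a b ↔ (a ≠ b ∧ dist (a : U) (b : U) < d₂)) :
    ∀ a b : {z // z ∈ Z}, a ≠ b → G.Reachable a b →
      dist (a : U) (b : U) < ((m.choose (m / 2) : ℝ) - 1) * d₂ ∧
      ¬(L (a : U) ⊆ L (b : U) ∨ L (b : U) ⊆ L (a : U)) := by
  classical
  intro a b hab hreach
  set M := m.choose (m / 2) with hMdef
  have hM1 : 1 ≤ M := Nat.choose_pos (Nat.div_le_self m 2)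
  -- endpoint distance bound for walks
  have walkdist : ∀ (x y : {z // z ∈ Z}) (w : G.Walk x y), w.length ≠ 0 →
      dist (x : U) (y : U) < (w.length : ℝ) * d₂ := by
    intro x y w
    induction w with
    | nil => simp
    | @cons x u y h q ih =>
      intro _
      have hxu : dist (x : U) (u : U) < d₂ := ((hG x u).mp h).2
      by_cases hq : q.length = 0
      · have : u = y := SimpleGraph.Walk.eq_of_length_eq_zero hq
        subst this
        simpa [hq] using hxu
      · have h2 := ih hq
        have : dist (x : U) (y : U) ≤ dist (x : U) (u : U) + dist (u : U) (y : U) :=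
          dist_triangle _ _ _
        calc dist (x : U) (y : U) ≤ dist (x : U) (u : U) + dist (u : U) (y : U) := this
          _ < d₂ + (q.length : ℝ) * d₂ := add_lt_add hxu h2
          _ = ((q.length + 1 : ℕ) : ℝ) * d₂ := by push_cast; ring
          _ = _ := by simp [SimpleGraph.Walk.length_cons]
  obtain ⟨w0⟩ := hreach
  set P := w0.toPath with hP
  set w := P.val with hwdef
  have hw : w.IsPath := P.prop
  -- the path has length ≤ M - 1
  have hlen : w.length + 1 ≤ M := by
    by_contra hcon
    push_neg at hcon
    set l : List U := ((w.support.map Subtype.val).take (M + 1)) with hl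
    have hsuplen : w.support.length = w.length + 1 := SimpleGraph.Walk.length_support w
    have hllen : l.length = M + 1 := by
      rw [hl, List.length_take, List.length_map, hsuplen]
      omega
    have hnodupl : l.Nodup := by
      refine List.Sublist.nodup (List.take_sublist _ _) ?_
      exact (hw.support_nodup).map Subtype.val_injective
    have hchain : l.Chain' (fun x y => dist x y < d₂) := by
      have base : List.Chain' (fun x y => dist x y < d₂) (w.support.map Subtype.val) :=
        List.isChain_map_of_isChain Subtype.val (fun p q hpq => ((hG p q).mp hpq).2) w.isChain_adj_support
      rw [hl]; exact List.IsChain.take base _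
    have hmemZ : ∀ x ∈ l, x ∈ Z := by
      intro x hx
      have : x ∈ w.support.map Subtype.val := List.mem_of_mem_take hx
      obtain ⟨z, _, rfl⟩ := List.mem_map.mp this
      exact z.2
    have hcard : M < l.toFinset.card := by
      rw [List.toFinset_card_of_nodup hnodupl, hllen]; omega
    obtain ⟨x, hx, y, hy, hxy, hcomp⟩ := exists_comparable L l.toFinset hcard
    have hxl : x ∈ l := List.mem_toFinset.mp hx
    have hyl : y ∈ l := List.mem_toFinset.mp hy
    obtain ⟨i, hi⟩ := List.mem_iff_get.mp hxl
    obtain ⟨j, hj⟩ := List.mem_iff_get.mp hyl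
    have hij : (i : ℕ) ≠ (j : ℕ) := by
      intro h; apply hxy; rw [← hi, ← hj]; congr 1; exact Fin.ext h
    -- two points at list positions i ≠ j are at distance < M * d₂
    have key : ∀ (i j : Fin l.length), (i : ℕ) < (j : ℕ) →
        dist (l.get i) (l.get j) < (M : ℝ) * d₂ := by
      intro i j hlt
      have hk : (i : ℕ) + ((j : ℕ) - (i : ℕ) - 1) + 1 = (j : ℕ) := by omega
      have hjlt : (i : ℕ) + ((j : ℕ) - (i : ℕ) - 1) + 1 < l.length := by omega
      have := chain_dist_bound l hchain ((j : ℕ) - (i : ℕ) - 1) (i : ℕ) hjlt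
      have hget : l.get ⟨(i : ℕ) + ((j : ℕ) - (i : ℕ) - 1) + 1, hjlt⟩ = l.get j := by
        congr 1; exact Fin.ext hk
      rw [hget] at this
      have hle : (((j : ℕ) - (i : ℕ) - 1 + 1 : ℕ) : ℝ) ≤ (M : ℝ) := by
        have : (j : ℕ) - (i : ℕ) - 1 + 1 ≤ M := by
          have := j.isLt; omega
        exact_mod_cast this
      calc dist (l.get i) (l.get j) < (((j : ℕ) - (i : ℕ) - 1 + 1 : ℕ) : ℝ) * d₂ := by
            convert this using 3
        _ ≤ (M : ℝ) * d₂ := by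
            exact mul_le_mul_of_nonneg_right hle hd₂.le
    have hsepxy : (M : ℝ) * d₂ ≤ dist x y :=
      hsep x (hmemZ x hxl) y (hmemZ y hyl) hxy hcomp
    rcases lt_or_gt_of_ne hij with h | h
    · have := key i j h; rw [hi, hj] at this; linarith
    · have := key j i h; rw [hi, hj] at this; rw [dist_comm] at this; linarith
  have hwne : w.length ≠ 0 := by
    intro h
    exact hab (SimpleGraph.Walk.eq_of_length_eq_zero h)
  have hdist : dist (a : U) (b : U) < ((M : ℝ) - 1) * d₂ := by
    have h1 := walkdist a b w hwne
    have h2 : (w.length : ℝ) ≤ (M : ℝ) - 1 := by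
      have : w.length ≤ M - 1 := by omega
      have h3 : ((w.length : ℕ) : ℝ) ≤ ((M - 1 : ℕ) : ℝ) := by exact_mod_cast this
      rwa [Nat.cast_sub hM1, Nat.cast_one] at h3
    calc dist (a : U) (b : U) < (w.length : ℝ) * d₂ := h1
      _ ≤ ((M : ℝ) - 1) * d₂ := mul_le_mul_of_nonneg_right h2 hd₂.le
  refine ⟨hdist, fun hcomp => ?_⟩
  have hne : (a : U) ≠ (b : U) := fun h => hab (Subtype.ext h)
  have := hsep (a : U) a.2 (b : U) b.2 hne hcomp
  have : (M : ℝ) * d₂ ≤ dist (a : U) (b : U) := this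
  linarith
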